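/- Let G ~ G(n+k, 1/2) be a uniformly random graph with vertex set {v₁,…,v_n} ⊔ U where |U| = k. For J = {i₁ < ⋯ < i_s} ⊆ [n], define G_J := G*v_{i₁}*v_{i₂}*⋯*v_{i_s}. Then for all J, J′ ⊆ [n], the random graphs G_J[U] and (G_J △ G_{J′})[U] are independent, where G_J △ G_{J′} is the graph on V(G) with edge set E(G_J)△E(G_{J′}). -/

import Mathlib

open Finset

variable {V : Type*}

/-- Local complementation at `v`: complement the induced subgraph on the
neighborhood of `v`. -/
def localComp (G : SimpleGraph V) (v : V) : SimpleGraph V where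
  Adj u w := (G.Adj v u ∧ G.Adj v w ∧ u ≠ w ∧ ¬ G.Adj u w) ∨
    (¬ (G.Adj v u ∧ G.Adj v w) ∧ G.Adj u w)
  symm := by
    constructor
    intro u w h
    rcases h with ⟨h1, h2, h3, h4⟩ | ⟨h1, h2⟩
    · exact Or.inl ⟨h2, h1, h3.symm, fun a => h4 a.symm⟩
    · exact Or.inr ⟨fun hc => h1 ⟨hc.2, hc.1⟩, h2.symm⟩
  loopless := by
    constructor
    rintro u (⟨-, -, h, -⟩ | ⟨-, h⟩)
    · exact h rfl
    · exact G.loopless.irrefl u h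

/-- Pivot at an edge `uv`: `G × uv = G * u * v * u`. -/
def pivotGraph (G : SimpleGraph V) (u v : V) : SimpleGraph V :=
  localComp (localComp (localComp G u) v) u

/-- Delete a vertex from a graph. -/
def deleteVertex (G : SimpleGraph V) (v : V) : SimpleGraph V where
  Adj a b := G.Adj a b ∧ a ≠ v ∧ b ≠ v
  symm := ⟨fun _ _ h => ⟨h.1.symm, h.2.2, h.2.1⟩⟩
  loopless := ⟨fun a h => G.loopless.irrefl a h.1⟩

/-- `G_J := G * v_{i₁} * v_{i₂} * ⋯ * v_{i_s}` where
`J = {i₁ < ⋯ < i_s} ⊆ [n]` and `v_i` are the `Fin n`-vertices. -/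
def GJ {n k : ℕ} (G : SimpleGraph (Fin n ⊕ Fin k)) (J : Finset (Fin n)) :
    SimpleGraph (Fin n ⊕ Fin k) :=
  (J.sort (· ≤ ·)).foldl (fun g i => localComp g (Sum.inl i)) G

/-- `G △ H`: the graph whose edge set is the symmetric difference of the edge
sets of `G` and `H`. -/
def gSymmDiff {W : Type*} (G H : SimpleGraph W) : SimpleGraph W where
  Adj a b := (G.Adj a b ∧ ¬ H.Adj a b) ∨ (H.Adj a b ∧ ¬ G.Adj a b)
  symm := by
    constructor
    rintro a b (⟨h1, h2⟩ | ⟨h1, h2⟩)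
    · exact Or.inl ⟨h1.symm, fun hc => h2 hc.symm⟩
    · exact Or.inr ⟨h1.symm, fun hc => h2 hc.symm⟩
  loopless := by
    constructor
    rintro a (⟨h1, -⟩ | ⟨h1, -⟩)
    · exact G.loopless.irrefl a h1
    · exact H.loopless.irrefl a h1

/-- The induced graph on `U` (the `Fin k`-vertices). -/
def indU {n k : ℕ} (G : SimpleGraph (Fin n ⊕ Fin k)) : SimpleGraph (Fin k) where
  Adj a b := G.Adj (Sum.inr a) (Sum.inr b)
  symm := ⟨fun _ _ h => G.symm.symm _ _ h⟩
  loopless := ⟨fun a h => G.loopless.irrefl _ h⟩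


namespace GJAux

variable {n k : ℕ}

/-- Lift a graph on `Fin k` to the sum type, with no other edges. -/
def liftU (S : SimpleGraph (Fin k)) : SimpleGraph (Fin n ⊕ Fin k) where
  Adj a b := ∃ x y, a = Sum.inr x ∧ b = Sum.inr y ∧ S.Adj x y
  symm := by constructor; rintro a b ⟨x, y, rfl, rfl, h⟩; exact ⟨y, x, rfl, rfl, h.symm⟩
  loopless := by constructor; rintro a ⟨x, y, hx, hy, h⟩; subst hx; cases hy; exact S.loopless.irrefl x h

/-- Delete all edges inside `U`. -/
def delU (G : SimpleGraph (Fin n ⊕ Fin k)) : SimpleGraph (Fin n ⊕ Fin k) where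
  Adj a b := G.Adj a b ∧ ¬ ∃ x y, a = Sum.inr x ∧ b = Sum.inr y
  symm := by
    constructor
    rintro a b ⟨h, hn⟩
    exact ⟨h.symm, by rintro ⟨x, y, rfl, rfl⟩; exact hn ⟨y, x, rfl, rfl⟩⟩
  loopless := ⟨fun a h => G.loopless.irrefl a h.1⟩

lemma sd_cancel {W : Type*} (A B : SimpleGraph W) :
    gSymmDiff A (gSymmDiff A B) = B := by
  ext a b; simp only [gSymmDiff]; tauto

lemma sd_sd {W : Type*} (A B C : SimpleGraph W) :
    gSymmDiff (gSymmDiff A C) (gSymmDiff B C) = gSymmDiff A B := by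
  ext a b; simp only [gSymmDiff]; tauto

lemma sd_bot {W : Type*} (S : SimpleGraph W) : gSymmDiff ⊥ S = S := by
  ext a b; simp only [gSymmDiff, SimpleGraph.bot_adj]; tauto

set_option maxHeartbeats 1600000 in
lemma lc_lift (G : SimpleGraph (Fin n ⊕ Fin k)) (S : SimpleGraph (Fin k)) (i : Fin n) :
    localComp (gSymmDiff G (liftU S)) (Sum.inl i) =
      gSymmDiff (localComp G (Sum.inl i)) (liftU S) := by
  have hl : ∀ u, (liftU (n := n) S).Adj (Sum.inl i) u = False := by
    intro u
    simp only [liftU, eq_iff_iff, iff_false]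
    rintro ⟨x, y, hx, -, -⟩
    exact Sum.inl_ne_inr hx
  ext a b
  have hG : a = b → ¬ G.Adj a b := fun h => h ▸ G.irrefl
  have hS : a = b → ¬ (liftU S).Adj a b := fun h => h ▸ (liftU S).irrefl
  simp only [localComp, gSymmDiff, hl]
  tauto

lemma foldl_lift (S : SimpleGraph (Fin k)) (l : List (Fin n)) :
    ∀ G : SimpleGraph (Fin n ⊕ Fin k),
      l.foldl (fun g i => localComp g (Sum.inl i)) (gSymmDiff G (liftU S)) =
        gSymmDiff (l.foldl (fun g i => localComp g (Sum.inl i)) G) (liftU S) := by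
  induction l with
  | nil => intro G; rfl
  | cons i l ih =>
      intro G
      simp only [List.foldl_cons, lc_lift]
      exact ih _

lemma GJ_lift (G : SimpleGraph (Fin n ⊕ Fin k)) (S : SimpleGraph (Fin k))
    (J : Finset (Fin n)) :
    GJ (gSymmDiff G (liftU S)) J = gSymmDiff (GJ G J) (liftU S) :=
  foldl_lift S _ G

lemma indU_sd (G H : SimpleGraph (Fin n ⊕ Fin k)) :
    indU (gSymmDiff G H) = gSymmDiff (indU G) (indU H) := rfl

lemma indU_liftU (S : SimpleGraph (Fin k)) : indU (liftU (n := n) S) = S := by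
  ext a b
  simp only [indU, liftU, Sum.inr.injEq]
  constructor
  · rintro ⟨x, y, rfl, rfl, h⟩; exact h
  · intro h; exact ⟨a, b, rfl, rfl, h⟩

lemma indU_delU (G : SimpleGraph (Fin n ⊕ Fin k)) : indU (delU G) = ⊥ := by
  ext a b
  simp only [indU, delU, SimpleGraph.bot_adj, iff_false, not_and, not_not]
  intro _
  exact ⟨a, b, rfl, rfl⟩

lemma dec (G : SimpleGraph (Fin n ⊕ Fin k)) :
    gSymmDiff (delU G) (liftU (indU G)) = G := by
  ext a b
  simp only [gSymmDiff, delU, liftU, indU]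
  constructor
  · rintro (⟨⟨h, -⟩, -⟩ | ⟨⟨x, y, rfl, rfl, h⟩, -⟩) <;> exact h
  · intro h
    by_cases hxy : ∃ x y, a = Sum.inr x ∧ b = Sum.inr y
    · obtain ⟨x, y, rfl, rfl⟩ := hxy
      exact Or.inr ⟨⟨x, y, rfl, rfl, h⟩, fun hc => hc.2 ⟨x, y, rfl, rfl⟩⟩
    · exact Or.inl ⟨⟨h, hxy⟩, by rintro ⟨x, y, rfl, rfl, -⟩; exact hxy ⟨x, y, rfl, rfl⟩⟩

lemma delU_sd_lift (B : SimpleGraph (Fin n ⊕ Fin k)) (S : SimpleGraph (Fin k)) :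
    delU (gSymmDiff B (liftU S)) = delU B := by
  ext a b
  simp only [delU, gSymmDiff, liftU]
  constructor
  · rintro ⟨(⟨h, -⟩ | ⟨⟨x, y, rfl, rfl, -⟩, -⟩), hn⟩
    · exact ⟨h, hn⟩
    · exact absurd ⟨x, y, rfl, rfl⟩ hn
  · rintro ⟨h, hn⟩
    exact ⟨Or.inl ⟨h, by rintro ⟨x, y, rfl, rfl, -⟩; exact hn ⟨x, y, rfl, rfl⟩⟩, hn⟩

lemma delU_eq_self {B : SimpleGraph (Fin n ⊕ Fin k)} (hB : indU B = ⊥) :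
    delU B = B := by
  ext a b
  simp only [delU, and_iff_left_iff_imp]
  intro h
  rintro ⟨x, y, rfl, rfl⟩
  have : (indU B).Adj x y := h
  rw [hB] at this
  exact this

lemma XX_lift (B : SimpleGraph (Fin n ⊕ Fin k)) (S : SimpleGraph (Fin k))
    (J : Finset (Fin n)) :
    indU (GJ (gSymmDiff B (liftU S)) J) = gSymmDiff (indU (GJ B J)) S := by
  rw [GJ_lift, indU_sd, indU_liftU]

lemma YY_lift (B : SimpleGraph (Fin n ⊕ Fin k)) (S : SimpleGraph (Fin k))
    (J J' : Finset (Fin n)) :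
    indU (gSymmDiff (GJ (gSymmDiff B (liftU S)) J) (GJ (gSymmDiff B (liftU S)) J')) =
      indU (gSymmDiff (GJ B J) (GJ B J')) := by
  rw [GJ_lift, GJ_lift, sd_sd]

lemma XX_dec (G : SimpleGraph (Fin n ⊕ Fin k)) (J : Finset (Fin n)) :
    indU (GJ G J) = gSymmDiff (indU (GJ (delU G) J)) (indU G) := by
  conv_lhs => rw [← dec G]
  rw [XX_lift]

lemma YY_delU (G : SimpleGraph (Fin n ⊕ Fin k)) (J J' : Finset (Fin n)) :
    indU (gSymmDiff (GJ (delU G) J) (GJ (delU G) J')) =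
      indU (gSymmDiff (GJ G J) (GJ G J')) := by
  conv_rhs => rw [← dec G]
  rw [YY_lift]

section equivs

variable (J J' : Finset (Fin n)) (H₁ H₂ : SimpleGraph (Fin k))

/-- Full decomposition equivalence. -/
def e4 : SimpleGraph (Fin n ⊕ Fin k) ≃
    SimpleGraph (Fin k) × {B : SimpleGraph (Fin n ⊕ Fin k) // indU B = ⊥} where
  toFun G := (indU G, ⟨delU G, indU_delU G⟩)
  invFun p := gSymmDiff p.2.1 (liftU p.1)
  left_inv G := dec G
  right_inv p := by
    obtain ⟨S, B, hB⟩ := p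
    simp only [Prod.mk.injEq, Subtype.mk.injEq]
    constructor
    · rw [indU_sd, indU_liftU, hB, sd_bot]
    · rw [delU_sd_lift, delU_eq_self hB]

def e2 : {G : SimpleGraph (Fin n ⊕ Fin k) // indU (GJ G J) = H₁} ≃
    {B : SimpleGraph (Fin n ⊕ Fin k) // indU B = ⊥} where
  toFun G := ⟨delU G.1, indU_delU G.1⟩
  invFun B := ⟨gSymmDiff B.1 (liftU (gSymmDiff (indU (GJ B.1 J)) H₁)), by
    rw [XX_lift, sd_cancel]⟩
  left_inv := by
    rintro ⟨G, hX⟩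
    apply Subtype.ext
    show gSymmDiff (delU G) (liftU (gSymmDiff (indU (GJ (delU G) J)) H₁)) = G
    rw [← hX, XX_dec G J, sd_cancel, dec]
  right_inv := by
    rintro ⟨B, hB⟩
    apply Subtype.ext
    show delU (gSymmDiff B _) = B
    rw [delU_sd_lift, delU_eq_self hB]

def e1 : {G : SimpleGraph (Fin n ⊕ Fin k) //
      indU (GJ G J) = H₁ ∧ indU (gSymmDiff (GJ G J) (GJ G J')) = H₂} ≃
    {B : {B : SimpleGraph (Fin n ⊕ Fin k) // indU B = ⊥} //
      indU (gSymmDiff (GJ B.1 J) (GJ B.1 J')) = H₂} where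
  toFun G := ⟨⟨delU G.1, indU_delU G.1⟩, by rw [YY_delU]; exact G.2.2⟩
  invFun B := ⟨gSymmDiff B.1.1 (liftU (gSymmDiff (indU (GJ B.1.1 J)) H₁)), by
    constructor
    · rw [XX_lift, sd_cancel]
    · rw [YY_lift]; exact B.2⟩
  left_inv := by
    rintro ⟨G, hX, hY⟩
    apply Subtype.ext
    show gSymmDiff (delU G) (liftU (gSymmDiff (indU (GJ (delU G) J)) H₁)) = G
    rw [← hX, XX_dec G J, sd_cancel, dec]
  right_inv := by
    rintro ⟨⟨B, hB⟩, hY⟩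
    apply Subtype.ext
    apply Subtype.ext
    show delU (gSymmDiff B _) = B
    rw [delU_sd_lift, delU_eq_self hB]

def e3 : {G : SimpleGraph (Fin n ⊕ Fin k) //
      indU (gSymmDiff (GJ G J) (GJ G J')) = H₂} ≃
    SimpleGraph (Fin k) × {B : {B : SimpleGraph (Fin n ⊕ Fin k) // indU B = ⊥} //
      indU (gSymmDiff (GJ B.1 J) (GJ B.1 J')) = H₂} where
  toFun G := (indU G.1, ⟨⟨delU G.1, indU_delU G.1⟩, by rw [YY_delU]; exact G.2⟩)
  invFun p := ⟨gSymmDiff p.2.1.1 (liftU p.1), by rw [YY_lift]; exact p.2.2⟩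
  left_inv := by
    rintro ⟨G, hY⟩
    apply Subtype.ext
    exact dec G
  right_inv := by
    rintro ⟨S, ⟨B, hB⟩, hY⟩
    simp only [Prod.mk.injEq, Subtype.mk.injEq]
    constructor
    · rw [indU_sd, indU_liftU, hB, sd_bot]
    · rw [delU_sd_lift, delU_eq_self hB]

end equivs

end GJAux

/-- Let `G ~ G(n+k, 1/2)` with vertex set `{v₁,…,v_n} ⊔ U`, `|U| = k`. For all
`J, J′ ⊆ [n]`, the random graphs `G_J[U]` and `(G_J △ G_{J′})[U]` are
independent. -/
theorem GJ_symmdiff_independent (n k : ℕ) (J J' : Finset (Fin n))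
    (H₁ H₂ : SimpleGraph (Fin k)) :
    (Nat.card {G : SimpleGraph (Fin n ⊕ Fin k) //
        indU (GJ G J) = H₁ ∧ indU (gSymmDiff (GJ G J) (GJ G J')) = H₂} : ℝ) /
      (Nat.card (SimpleGraph (Fin n ⊕ Fin k)) : ℝ)
    = (Nat.card {G : SimpleGraph (Fin n ⊕ Fin k) // indU (GJ G J) = H₁} : ℝ) /
        (Nat.card (SimpleGraph (Fin n ⊕ Fin k)) : ℝ) *
      ((Nat.card {G : SimpleGraph (Fin n ⊕ Fin k) //
          indU (gSymmDiff (GJ G J) (GJ G J')) = H₂} : ℝ) /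
        (Nat.card (SimpleGraph (Fin n ⊕ Fin k)) : ℝ)) := by
  classical
  set a : ℕ := Nat.card (SimpleGraph (Fin k)) with ha
  set b : ℕ := Nat.card {B : SimpleGraph (Fin n ⊕ Fin k) // indU B = ⊥} with hb
  set c : ℕ := Nat.card {B : {B : SimpleGraph (Fin n ⊕ Fin k) // indU B = ⊥} //
      indU (gSymmDiff (GJ B.1 J) (GJ B.1 J')) = H₂} with hc
  have h1 : Nat.card {G : SimpleGraph (Fin n ⊕ Fin k) //
      indU (GJ G J) = H₁ ∧ indU (gSymmDiff (GJ G J) (GJ G J')) = H₂} = c :=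
    Nat.card_congr (GJAux.e1 J J' H₁ H₂)
  have h2 : Nat.card {G : SimpleGraph (Fin n ⊕ Fin k) // indU (GJ G J) = H₁} = b :=
    Nat.card_congr (GJAux.e2 J H₁)
  have h3 : Nat.card {G : SimpleGraph (Fin n ⊕ Fin k) //
      indU (gSymmDiff (GJ G J) (GJ G J')) = H₂} = a * c := by
    rw [Nat.card_congr (GJAux.e3 J J' H₂), Nat.card_prod]
  have h4 : Nat.card (SimpleGraph (Fin n ⊕ Fin k)) = a * b := by
    rw [Nat.card_congr (GJAux.e4 (n := n) (k := k)), Nat.card_prod]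
  have hapos : 0 < a := Nat.card_pos
  have hbpos : 0 < b := by
    have : Nonempty {B : SimpleGraph (Fin n ⊕ Fin k) // indU B = ⊥} :=
      ⟨⟨⊥, by ext x y; simp [indU]⟩⟩
    exact Nat.card_pos
  rw [h1, h2, h3, h4]
  have ha0 : (a : ℝ) ≠ 0 := Nat.cast_ne_zero.mpr hapos.ne'
  have hb0 : (b : ℝ) ≠ 0 := Nat.cast_ne_zero.mpr hbpos.ne'
  push_cast
  field_simp
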